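/- Dipole asymptotics with rate (half-line Dirichlet problem): let u₀ ∈ L¹(0,∞) have finite first moment 𝒩₁ = ∫₀^∞ y u₀(y) dy and finite second absolute moment 𝒩₂ = ∫₀^∞ y² |u₀(y)| dy < ∞, and let u(x,t) = ∫₀^∞ (G_t(x−y) − G_t(x+y)) u₀(y) dy for x > 0, t > 0. Then there is a universal constant C > 0 such that for all t > 0: ∫₀^∞ |u(x,t) − 2𝒩₁·D(x,t)| dx ≤ C·𝒩₂·t^{−1}. -/

import Mathlib

open MeasureTheory Real Filter

/-- The 1D Gaussian heat kernel `G_t(x) = (4πt)^{-1/2} exp(-x²/(4t))`. -/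
noncomputable def heatKernel1 (t x : ℝ) : ℝ :=
  (4 * π * t) ^ (-(1 : ℝ) / 2) * exp (-x ^ 2 / (4 * t))

/-- The dipole solution `D(x,t) = -∂_x G_t(x) = (x/(2t))·(4πt)^{-1/2} e^{-x²/(4t)}`. -/
noncomputable def dipole (x t : ℝ) : ℝ :=
  (x / (2 * t)) * (4 * π * t) ^ (-(1 : ℝ) / 2) * exp (-x ^ 2 / (4 * t))

/-- The solution of the Dirichlet problem for the heat equation on the half-line,
obtained by antisymmetric reflection:
`u(x,t) = ∫₀^∞ (G_t(x−y) − G_t(x+y)) u₀(y) dy`. -/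
noncomputable def halfLineSol (u₀ : ℝ → ℝ) (x t : ℝ) : ℝ :=
  ∫ y in Set.Ioi (0 : ℝ), (heatKernel1 t (x - y) - heatKernel1 t (x + y)) * u₀ y

noncomputable def dipoleDeriv (t x : ℝ) : ℝ :=
  (4 * π * t) ^ (-(1 : ℝ) / 2) * exp (-x ^ 2 / (4 * t)) * (1 / (2 * t) - x ^ 2 / (4 * t ^ 2))

lemma hasDerivAt_neg_sq_div (t x : ℝ) :
    HasDerivAt (fun x : ℝ => -x ^ 2 / (4 * t)) (-(2 * x) / (4 * t)) x := by
  have h := ((hasDerivAt_pow 2 x).neg).div_const (4 * t)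
  simpa [pow_one] using h

lemma continuous_heatKernel1 (t : ℝ) : Continuous (heatKernel1 t) := by
  unfold heatKernel1
  exact continuous_const.mul (((continuous_pow 2).neg.div_const _).rexp)

lemma continuous_dipole (t : ℝ) : Continuous (fun x => dipole x t) := by
  unfold dipole
  exact ((continuous_id.div_const _).mul continuous_const).mul
    (((continuous_pow 2).neg.div_const _).rexp)

lemma continuous_dipoleDeriv (t : ℝ) : Continuous (dipoleDeriv t) := by
  unfold dipoleDeriv
  exact (continuous_const.mul (((continuous_pow 2).neg.div_const _).rexp)).mul
    (continuous_const.sub ((continuous_pow 2).div_const _))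

lemma hasDerivAt_heatKernel1 {t : ℝ} (ht : 0 < t) (x : ℝ) :
    HasDerivAt (heatKernel1 t) (-(dipole x t)) x := by
  have h := ((hasDerivAt_neg_sq_div t x).exp).const_mul ((4 * π * t) ^ (-(1 : ℝ) / 2))
  refine h.congr_deriv ?_
  unfold dipole
  field_simp
  ring

lemma hasDerivAt_dipole {t : ℝ} (ht : 0 < t) (x : ℝ) :
    HasDerivAt (fun x => dipole x t) (dipoleDeriv t x) x := by
  have hlin : HasDerivAt (fun x : ℝ => x / (2 * t) * (4 * π * t) ^ (-(1 : ℝ) / 2))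
      (1 / (2 * t) * (4 * π * t) ^ (-(1 : ℝ) / 2)) x := by
    simpa using ((hasDerivAt_id x).div_const (2 * t)).mul_const ((4 * π * t) ^ (-(1 : ℝ) / 2))
  have h := hlin.mul ((hasDerivAt_neg_sq_div t x).exp)
  refine h.congr_deriv ?_
  unfold dipoleDeriv
  field_simp
  ring

-- w * exp(-w) ≤ exp(-w/2) for w ≥ 0
lemma mul_exp_neg_le {w : ℝ} (hw : 0 ≤ w) : w * exp (-w) ≤ exp (-(w / 2)) := by
  have hle : w ≤ exp (w / 2) := by
    have h := add_one_le_exp (w / 4)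
    have hsq : exp (w / 2) = exp (w / 4) ^ 2 := by
      rw [sq, ← exp_add]; ring_nf
    nlinarith [exp_pos (w / 4), sq_nonneg (w / 4 - 1)]
  have hm : exp (-(w / 2)) * exp (w / 2) = 1 := by rw [← exp_add]; simp
  have h2 : w * exp (-w) = (w * exp (-(w / 2))) * exp (-(w / 2)) := by
    rw [show -w = -(w / 2) + -(w / 2) by ring, exp_add]; ring
  rw [h2]
  have h3 : w * exp (-(w / 2)) ≤ 1 := by
    calc w * exp (-(w / 2)) ≤ exp (w / 2) * exp (-(w / 2)) :=
          mul_le_mul_of_nonneg_right hle (exp_pos _).le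
      _ = 1 := by rw [mul_comm]; exact hm
  calc (w * exp (-(w / 2))) * exp (-(w / 2)) ≤ 1 * exp (-(w / 2)) :=
        mul_le_mul_of_nonneg_right h3 (exp_pos _).le
    _ = exp (-(w / 2)) := one_mul _

lemma integrable_gauss {b : ℝ} (hb : 0 < b) : Integrable (fun x : ℝ => exp (-x ^ 2 / b)) := by
  have h := integrable_exp_neg_mul_sq (show (0:ℝ) < 1 / b by positivity)
  refine h.congr ?_
  filter_upwards with x
  ring_nf

lemma integral_gauss {b : ℝ} (hb : 0 < b) : ∫ x : ℝ, exp (-x ^ 2 / b) = √(π * b) := by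
  have h := integral_gaussian (1 / b)
  rw [show π / (1 / b) = π * b by field_simp] at h
  rw [← h]
  congr 1 with x
  ring_nf

lemma dipoleDeriv_abs_le {t : ℝ} (ht : 0 < t) (x : ℝ) :
    |dipoleDeriv t x| ≤ (4 * π * t) ^ (-(1 : ℝ) / 2) *
      (1 / (2 * t) * exp (-x ^ 2 / (4 * t)) + 1 / t * exp (-x ^ 2 / (8 * t))) := by
  have hπ : 0 < π := pi_pos
  have hc : (0:ℝ) ≤ (4 * π * t) ^ (-(1 : ℝ) / 2) := by positivity
  have he : (0:ℝ) < exp (-x ^ 2 / (4 * t)) := exp_pos _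
  unfold dipoleDeriv
  rw [abs_mul, abs_mul, abs_of_nonneg hc, abs_of_pos he]
  rw [mul_assoc]
  apply mul_le_mul_of_nonneg_left _ hc
  have h1 : |1 / (2 * t) - x ^ 2 / (4 * t ^ 2)| ≤ 1 / (2 * t) + x ^ 2 / (4 * t ^ 2) := by
    refine (abs_sub _ _).trans ?_
    rw [abs_of_pos (by positivity : (0:ℝ) < 1 / (2 * t)), abs_of_nonneg (by positivity)]
  calc exp (-x ^ 2 / (4 * t)) * |1 / (2 * t) - x ^ 2 / (4 * t ^ 2)|
      ≤ exp (-x ^ 2 / (4 * t)) * (1 / (2 * t) + x ^ 2 / (4 * t ^ 2)) :=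
        mul_le_mul_of_nonneg_left h1 he.le
    _ = 1 / (2 * t) * exp (-x ^ 2 / (4 * t))
        + 1 / t * ((x ^ 2 / (4 * t)) * exp (-(x ^ 2 / (4 * t)))) := by
        rw [show -(x ^ 2 / (4 * t)) = -x ^ 2 / (4 * t) by ring]
        field_simp
    _ ≤ 1 / (2 * t) * exp (-x ^ 2 / (4 * t)) + 1 / t * exp (-x ^ 2 / (8 * t)) := by
        gcongr
        have h := mul_exp_neg_le (show (0:ℝ) ≤ x ^ 2 / (4 * t) by positivity)
        rw [show -(x ^ 2 / (4 * t) / 2) = -x ^ 2 / (8 * t) by ring] at h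
        exact h

lemma dipoleDeriv_bound_integrable {t : ℝ} (ht : 0 < t) :
    Integrable (fun x : ℝ => (4 * π * t) ^ (-(1 : ℝ) / 2) *
      (1 / (2 * t) * exp (-x ^ 2 / (4 * t)) + 1 / t * exp (-x ^ 2 / (8 * t)))) := by
  exact (((integrable_gauss (by positivity : (0:ℝ) < 4 * t)).const_mul (1 / (2 * t))).add
    ((integrable_gauss (by positivity : (0:ℝ) < 8 * t)).const_mul (1 / t))).const_mul _

lemma integrable_dipoleDeriv {t : ℝ} (ht : 0 < t) : Integrable (dipoleDeriv t) := by
  refine (dipoleDeriv_bound_integrable ht).mono' (continuous_dipoleDeriv t).aestronglyMeasurable ?_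
  filter_upwards with x
  rw [Real.norm_eq_abs]
  exact dipoleDeriv_abs_le ht x

lemma integral_abs_dipoleDeriv_le {t : ℝ} (ht : 0 < t) :
    ∫ x : ℝ, |dipoleDeriv t x| ≤ 2 / t := by
  have hπ : 0 < π := pi_pos
  have h1 : ∫ x : ℝ, |dipoleDeriv t x| ≤ ∫ x : ℝ, (4 * π * t) ^ (-(1 : ℝ) / 2) *
      (1 / (2 * t) * exp (-x ^ 2 / (4 * t)) + 1 / t * exp (-x ^ 2 / (8 * t))) :=
    integral_mono (integrable_dipoleDeriv ht).abs (dipoleDeriv_bound_integrable ht)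
      (fun x => dipoleDeriv_abs_le ht x)
  refine h1.trans ?_
  rw [integral_const_mul, integral_add ((integrable_gauss (by positivity : (0:ℝ) < 4 * t)).const_mul _)
    ((integrable_gauss (by positivity : (0:ℝ) < 8 * t)).const_mul _),
    integral_const_mul, integral_const_mul, integral_gauss (by positivity : (0:ℝ) < 4 * t),
    integral_gauss (by positivity : (0:ℝ) < 8 * t)]
  have hc : (4 * π * t) ^ (-(1 : ℝ) / 2) = (√(4 * π * t))⁻¹ := by
    rw [sqrt_eq_rpow, ← rpow_neg (by positivity : (0:ℝ) ≤ 4 * π * t)]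
    norm_num
  have h4 : √(π * (4 * t)) = √(4 * π * t) := by ring_nf
  have h8 : √(π * (8 * t)) = √2 * √(4 * π * t) := by
    rw [← Real.sqrt_mul (by norm_num : (0:ℝ) ≤ 2)]
    ring_nf
  rw [hc, h4, h8]
  have hs : (0:ℝ) < √(4 * π * t) := Real.sqrt_pos.mpr (by positivity)
  have hsqrt2 : √2 ≤ 3 / 2 := by
    rw [show (3:ℝ) / 2 = √((3 / 2) ^ 2) by rw [Real.sqrt_sq]; norm_num]
    exact Real.sqrt_le_sqrt (by norm_num)
  have key : (√(4 * π * t))⁻¹ * (1 / (2 * t) * √(4 * π * t) + 1 / t * (√2 * √(4 * π * t)))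
      = 1 / (2 * t) + √2 / t := by
    field_simp
  rw [key]
  rw [div_add_div _ _ (by positivity : (2:ℝ) * t ≠ 0) (by positivity : t ≠ 0)]
  rw [div_le_div_iff₀ (by positivity) ht]
  nlinarith [hsqrt2, ht, mul_pos ht ht]

lemma kernel_est {t : ℝ} (ht : 0 < t) {y : ℝ} (hy : 0 ≤ y) :
    Integrable (fun x : ℝ => heatKernel1 t (x - y) - heatKernel1 t (x + y) - 2 * y * dipole x t) ∧
    ∫ x : ℝ, |heatKernel1 t (x - y) - heatKernel1 t (x + y) - 2 * y * dipole x t| ≤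
      4 / t * y ^ 2 := by
  have hDpInt : Integrable (dipoleDeriv t) := integrable_dipoleDeriv ht
  have hDpc : Continuous (dipoleDeriv t) := continuous_dipoleDeriv t
  set B : ℝ → ℝ := fun x => ∫ r in Set.Ioc (0:ℝ) y,
    (|dipoleDeriv t (x + r)| + |dipoleDeriv t (x - r)|) with hBdef
  -- pointwise bound |K x| ≤ y * B x
  have hpt : ∀ x : ℝ,
      |heatKernel1 t (x - y) - heatKernel1 t (x + y) - 2 * y * dipole x t| ≤ y * B x := by
    intro x
    have hψ : ∀ s : ℝ, HasDerivAt
        (fun s => heatKernel1 t (x - s) - heatKernel1 t (x + s) - 2 * s * dipole x t)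
        (dipole (x - s) t + dipole (x + s) t - 2 * dipole x t) s := by
      intro s
      have h1 : HasDerivAt (fun s : ℝ => x - s) (-1) s := by
        simpa using (hasDerivAt_id s).const_sub x
      have h2 : HasDerivAt (fun s : ℝ => x + s) (1:ℝ) s := by
        simpa using (hasDerivAt_id s).const_add x
      have hA := (hasDerivAt_heatKernel1 ht (x - s)).comp s h1
      have hB2 := (hasDerivAt_heatKernel1 ht (x + s)).comp s h2
      have hC : HasDerivAt (fun s : ℝ => 2 * s * dipole x t) (2 * dipole x t) s := by
        simpa using ((hasDerivAt_id s).const_mul 2).mul_const (dipole x t)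
      have h := (hA.sub hB2).sub hC
      refine h.congr_deriv ?_
      simp [Function.comp]
      try ring
    have hψ'c : Continuous
        (fun s => dipole (x - s) t + dipole (x + s) t - 2 * dipole x t) :=
      (((continuous_dipole t).comp (continuous_const.sub continuous_id)).add
        ((continuous_dipole t).comp (continuous_const.add continuous_id))).sub continuous_const
    have hK : heatKernel1 t (x - y) - heatKernel1 t (x + y) - 2 * y * dipole x t =
        ∫ s in (0:ℝ)..y, (dipole (x - s) t + dipole (x + s) t - 2 * dipole x t) := by
      have h := intervalIntegral.integral_eq_sub_of_hasDerivAt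
        (f := fun s => heatKernel1 t (x - s) - heatKernel1 t (x + s) - 2 * s * dipole x t)
        (fun s _ => hψ s) (hψ'c.intervalIntegrable 0 y)
      rw [h]
      simp
    -- second FTC step
    have hχ : ∀ s : ℝ, dipole (x - s) t + dipole (x + s) t - 2 * dipole x t =
        ∫ r in (0:ℝ)..s, (dipoleDeriv t (x + r) - dipoleDeriv t (x - r)) := by
      intro s
      have hd : ∀ r : ℝ, HasDerivAt (fun r => dipole (x + r) t + dipole (x - r) t)
          (dipoleDeriv t (x + r) - dipoleDeriv t (x - r)) r := by
        intro r
        have h1 : HasDerivAt (fun r : ℝ => x - r) (-1) r := by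
          simpa using (hasDerivAt_id r).const_sub x
        have h2 : HasDerivAt (fun r : ℝ => x + r) (1:ℝ) r := by
          simpa using (hasDerivAt_id r).const_add x
        have hA := (hasDerivAt_dipole ht (x + r)).comp r h2
        have hB2 := (hasDerivAt_dipole ht (x - r)).comp r h1
        have h := hA.add hB2
        refine h.congr_deriv ?_
        simp [Function.comp]
        try ring
      have hcont : Continuous (fun r => dipoleDeriv t (x + r) - dipoleDeriv t (x - r)) :=
        (hDpc.comp (continuous_const.add continuous_id)).sub
          (hDpc.comp (continuous_const.sub continuous_id))
      have h := intervalIntegral.integral_eq_sub_of_hasDerivAt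
        (f := fun r => dipole (x + r) t + dipole (x - r) t)
        (fun r _ => hd r) (hcont.intervalIntegrable 0 s)
      rw [h]
      simp
      ring
    have habs_cont : Continuous (fun r => |dipoleDeriv t (x + r)| + |dipoleDeriv t (x - r)|) :=
      ((hDpc.comp (continuous_const.add continuous_id)).abs).add
        ((hDpc.comp (continuous_const.sub continuous_id)).abs)
    have hBx : B x = ∫ r in (0:ℝ)..y, (|dipoleDeriv t (x + r)| + |dipoleDeriv t (x - r)|) :=
      (intervalIntegral.integral_of_le hy).symm
    have hbd : ∀ s ∈ Set.Icc (0:ℝ) y,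
        |dipole (x - s) t + dipole (x + s) t - 2 * dipole x t| ≤ B x := by
      intro s hs
      rw [hχ s, hBx]
      calc |∫ r in (0:ℝ)..s, (dipoleDeriv t (x + r) - dipoleDeriv t (x - r))|
          ≤ ∫ r in (0:ℝ)..s, |dipoleDeriv t (x + r) - dipoleDeriv t (x - r)| :=
            intervalIntegral.abs_integral_le_integral_abs hs.1
        _ ≤ ∫ r in (0:ℝ)..s, (|dipoleDeriv t (x + r)| + |dipoleDeriv t (x - r)|) := by
            apply intervalIntegral.integral_mono_on hs.1
              (((hDpc.comp (continuous_const.add continuous_id)).sub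
                (hDpc.comp (continuous_const.sub continuous_id))).abs.intervalIntegrable 0 s)
              (habs_cont.intervalIntegrable 0 s)
            intro r _
            exact abs_sub _ _
        _ ≤ ∫ r in (0:ℝ)..y, (|dipoleDeriv t (x + r)| + |dipoleDeriv t (x - r)|) := by
            apply intervalIntegral.integral_mono_interval le_rfl hs.1 hs.2
            · filter_upwards with r
              positivity
            · exact habs_cont.intervalIntegrable 0 y
    calc |heatKernel1 t (x - y) - heatKernel1 t (x + y) - 2 * y * dipole x t|
        = |∫ s in (0:ℝ)..y, (dipole (x - s) t + dipole (x + s) t - 2 * dipole x t)| := by rw [hK]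
      _ ≤ ∫ s in (0:ℝ)..y, |dipole (x - s) t + dipole (x + s) t - 2 * dipole x t| :=
          intervalIntegral.abs_integral_le_integral_abs hy
      _ ≤ ∫ s in (0:ℝ)..y, B x := by
          apply intervalIntegral.integral_mono_on hy
            (hψ'c.abs.intervalIntegrable 0 y) (intervalIntegrable_const) hbd
      _ = y * B x := by simp [smul_eq_mul]
  -- integrability and integral bound for B via Fubini
  have hFc : Continuous (fun p : ℝ × ℝ => |dipoleDeriv t (p.1 + p.2)| + |dipoleDeriv t (p.1 - p.2)|) :=
    ((hDpc.comp (continuous_fst.add continuous_snd)).abs).add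
      ((hDpc.comp (continuous_fst.sub continuous_snd)).abs)
  have hslice : ∀ r : ℝ, Integrable (fun x : ℝ => |dipoleDeriv t (x + r)| + |dipoleDeriv t (x - r)|) :=
    fun r => (hDpInt.abs.comp_add_right r).add (hDpInt.abs.comp_sub_right r)
  have hint_slice : ∀ r : ℝ,
      (∫ x : ℝ, (|dipoleDeriv t (x + r)| + |dipoleDeriv t (x - r)|)) = 2 * ∫ x : ℝ, |dipoleDeriv t x| := by
    intro r
    rw [integral_add (hDpInt.abs.comp_add_right r) (hDpInt.abs.comp_sub_right r),
      integral_add_right_eq_self (fun x => |dipoleDeriv t x|) r,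
      integral_sub_right_eq_self (fun x => |dipoleDeriv t x|) r]
    ring
  have hFint : Integrable (fun p : ℝ × ℝ => |dipoleDeriv t (p.1 + p.2)| + |dipoleDeriv t (p.1 - p.2)|)
      (volume.prod (volume.restrict (Set.Ioc 0 y))) := by
    refine (integrable_prod_iff' hFc.aestronglyMeasurable).mpr ⟨ae_of_all _ fun r => hslice r, ?_⟩
    have heq : (fun r : ℝ => ∫ x : ℝ, ‖|dipoleDeriv t (x + r)| + |dipoleDeriv t (x - r)|‖) =
        fun _ : ℝ => 2 * ∫ x : ℝ, |dipoleDeriv t x| := by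
      funext r
      rw [← hint_slice r]
      congr 1 with x
      rw [Real.norm_eq_abs, abs_of_nonneg (by positivity)]
    rw [heq]
    exact integrableOn_const measure_Ioc_lt_top.ne
  have hBint : Integrable B := hFint.integral_prod_left
  have hBnonneg : ∀ x, 0 ≤ B x := fun x => integral_nonneg fun r => by positivity
  have hBval : ∫ x : ℝ, B x ≤ 4 / t * y := by
    have hswap := integral_integral_swap
      (f := fun x r : ℝ => |dipoleDeriv t (x + r)| + |dipoleDeriv t (x - r)|) hFint
    rw [hBdef]
    rw [hswap]
    have : (∫ r in Set.Ioc (0:ℝ) y, ∫ x : ℝ, (|dipoleDeriv t (x + r)| + |dipoleDeriv t (x - r)|)) =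
        ∫ r in Set.Ioc (0:ℝ) y, (2 * ∫ x : ℝ, |dipoleDeriv t x|) := by
      apply setIntegral_congr_fun measurableSet_Ioc
      intro r _
      exact hint_slice r
    rw [this, setIntegral_const, measureReal_def, Real.volume_Ioc, smul_eq_mul]
    have h2 : (ENNReal.ofReal (y - 0)).toReal = y := by
      rw [ENNReal.toReal_ofReal (by linarith)]
      ring_nf
    rw [h2]
    have hI := integral_abs_dipoleDeriv_le ht
    calc y * (2 * ∫ x : ℝ, |dipoleDeriv t x|) ≤ y * (2 * (2 / t)) := by
          apply mul_le_mul_of_nonneg_left _ hy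
          linarith
      _ = 4 / t * y := by ring
  -- conclude
  have hKc : Continuous (fun x : ℝ => heatKernel1 t (x - y) - heatKernel1 t (x + y) - 2 * y * dipole x t) :=
    (((continuous_heatKernel1 t).comp (continuous_id.sub continuous_const)).sub
      ((continuous_heatKernel1 t).comp (continuous_id.add continuous_const))).sub
      (continuous_const.mul (continuous_dipole t))
  have hKint : Integrable (fun x : ℝ => heatKernel1 t (x - y) - heatKernel1 t (x + y) - 2 * y * dipole x t) := by
    refine (hBint.const_mul y).mono' hKc.aestronglyMeasurable ?_
    filter_upwards with x
    rw [Real.norm_eq_abs]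
    exact hpt x
  refine ⟨hKint, ?_⟩
  calc ∫ x : ℝ, |heatKernel1 t (x - y) - heatKernel1 t (x + y) - 2 * y * dipole x t|
      ≤ ∫ x : ℝ, y * B x := integral_mono hKint.abs (hBint.const_mul y) hpt
    _ = y * ∫ x : ℝ, B x := integral_const_mul y B
    _ ≤ y * (4 / t * y) := by
        apply mul_le_mul_of_nonneg_left hBval hy
    _ = 4 / t * y ^ 2 := by ring

lemma main_est {t : ℝ} (ht : 0 < t) (v : ℝ → ℝ) (hvm : StronglyMeasurable v)
    (hv : IntegrableOn v (Set.Ioi (0:ℝ)))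
    (hv1 : IntegrableOn (fun y => y * v y) (Set.Ioi (0:ℝ)))
    (hv2 : IntegrableOn (fun y => y ^ 2 * |v y|) (Set.Ioi (0:ℝ))) :
    (∫ x in Set.Ioi (0:ℝ),
        |halfLineSol v x t - 2 * (∫ y in Set.Ioi (0:ℝ), y * v y) * dipole x t|) ≤
      4 * (∫ y in Set.Ioi (0:ℝ), y ^ 2 * |v y|) * t ^ (-(1:ℝ)) := by
  have hπ : 0 < π := pi_pos
  set c : ℝ := (4 * π * t) ^ (-(1 : ℝ) / 2) with hcdef
  have hc : 0 ≤ c := by positivity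
  have hheat_le : ∀ z : ℝ, |heatKernel1 t z| ≤ c := by
    intro z
    unfold heatKernel1
    rw [hcdef, abs_mul, abs_of_nonneg (by positivity), abs_of_pos (exp_pos _)]
    calc (4 * π * t) ^ (-(1:ℝ) / 2) * exp (-z ^ 2 / (4 * t))
        ≤ (4 * π * t) ^ (-(1:ℝ) / 2) * 1 := by
          apply mul_le_mul_of_nonneg_left _ (by positivity)
          rw [exp_le_one_iff, show -z ^ 2 / (4 * t) = -(z ^ 2 / (4 * t)) by ring]
          simp only [neg_nonpos]
          positivity
      _ = (4 * π * t) ^ (-(1:ℝ) / 2) := mul_one _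
  set Kf : ℝ → ℝ → ℝ := fun x y =>
    heatKernel1 t (x - y) - heatKernel1 t (x + y) - 2 * y * dipole x t with hKfdef
  -- per-x identity
  have hAint : ∀ x : ℝ, Integrable
      (fun y => (heatKernel1 t (x - y) - heatKernel1 t (x + y)) * v y)
      (volume.restrict (Set.Ioi (0:ℝ))) := by
    intro x
    refine (hv.norm.const_mul (2 * c)).mono' ?_ ?_
    · exact (Continuous.aestronglyMeasurable
        (((continuous_heatKernel1 t).comp (continuous_const.sub continuous_id)).sub
          ((continuous_heatKernel1 t).comp (continuous_const.add continuous_id)))).mul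
        hv.aestronglyMeasurable
    · filter_upwards with z
      rw [norm_mul]
      apply mul_le_mul_of_nonneg_right _ (norm_nonneg _)
      calc ‖heatKernel1 t (x - z) - heatKernel1 t (x + z)‖
          ≤ |heatKernel1 t (x - z)| + |heatKernel1 t (x + z)| := abs_sub _ _
        _ ≤ c + c := add_le_add (hheat_le _) (hheat_le _)
        _ = 2 * c := by ring
  have hBint : ∀ x : ℝ, Integrable (fun y => 2 * y * dipole x t * v y)
      (volume.restrict (Set.Ioi (0:ℝ))) := by
    intro x
    exact (hv1.const_mul (2 * dipole x t)).congr (ae_of_all _ fun y => by ring)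
  have hid : ∀ x : ℝ, halfLineSol v x t - 2 * (∫ y in Set.Ioi (0:ℝ), y * v y) * dipole x t
      = ∫ y in Set.Ioi (0:ℝ), Kf x y * v y := by
    intro x
    have h2 : 2 * (∫ y in Set.Ioi (0:ℝ), y * v y) * dipole x t
        = ∫ y in Set.Ioi (0:ℝ), 2 * y * dipole x t * v y := by
      rw [show (∫ y in Set.Ioi (0:ℝ), 2 * y * dipole x t * v y)
          = ∫ y in Set.Ioi (0:ℝ), (2 * dipole x t) * (y * v y) from
        integral_congr_ae (ae_of_all _ fun y => by ring), integral_const_mul]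
      ring
    unfold halfLineSol
    rw [h2, ← integral_sub (hAint x) (hBint x)]
    congr 1 with y
    simp only [hKfdef]
    ring
  -- kernel L¹ bound in x, for y > 0
  have hnormbd : ∀ y : ℝ, 0 < y →
      (∫ x in Set.Ioi (0:ℝ), ‖Kf x y * v y‖) ≤ 4 / t * (y ^ 2 * |v y|) := by
    intro y hy
    obtain ⟨hKi, hKb⟩ := kernel_est ht hy.le
    have heq : (fun x : ℝ => ‖Kf x y * v y‖) = fun x => |Kf x y| * |v y| := by
      funext x
      rw [Real.norm_eq_abs, abs_mul]
    rw [heq]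
    calc (∫ x in Set.Ioi (0:ℝ), |Kf x y| * |v y|)
        ≤ ∫ x : ℝ, |Kf x y| * |v y| := by
          apply setIntegral_le_integral (hKi.abs.mul_const _)
          filter_upwards with x
          positivity
      _ = (∫ x : ℝ, |Kf x y|) * |v y| := integral_mul_const _ _
      _ ≤ (4 / t * y ^ 2) * |v y| := mul_le_mul_of_nonneg_right hKb (abs_nonneg _)
      _ = 4 / t * (y ^ 2 * |v y|) := by ring
  -- joint integrability
  have hKc2 : Continuous (fun p : ℝ × ℝ => Kf p.1 p.2) := by
    simp only [hKfdef]
    exact (((continuous_heatKernel1 t).comp (continuous_fst.sub continuous_snd)).sub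
      ((continuous_heatKernel1 t).comp (continuous_fst.add continuous_snd))).sub
      ((continuous_const.mul continuous_snd).mul ((continuous_dipole t).comp continuous_fst))
  have hGsm : StronglyMeasurable (fun p : ℝ × ℝ => Kf p.1 p.2 * v p.2) :=
    hKc2.stronglyMeasurable.mul (hvm.comp_measurable measurable_snd)
  have hGint : Integrable (fun p : ℝ × ℝ => Kf p.1 p.2 * v p.2)
      ((volume.restrict (Set.Ioi (0:ℝ))).prod (volume.restrict (Set.Ioi (0:ℝ)))) := by
    refine (integrable_prod_iff' hGsm.aestronglyMeasurable).mpr ⟨?_, ?_⟩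
    · filter_upwards [ae_restrict_mem measurableSet_Ioi] with y hy
      exact ((kernel_est ht (le_of_lt hy)).1.mul_const (v y)).integrableOn
    · refine (hv2.const_mul (4 / t)).mono'
        (hGsm.norm.integral_prod_left').aestronglyMeasurable ?_
      filter_upwards [ae_restrict_mem measurableSet_Ioi] with y hy
      rw [Real.norm_eq_abs, abs_of_nonneg (integral_nonneg fun x => norm_nonneg _)]
      exact hnormbd y hy
  -- final chain
  calc (∫ x in Set.Ioi (0:ℝ),
        |halfLineSol v x t - 2 * (∫ y in Set.Ioi (0:ℝ), y * v y) * dipole x t|)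
      ≤ ∫ x in Set.Ioi (0:ℝ), ∫ y in Set.Ioi (0:ℝ), ‖Kf x y * v y‖ := by
        apply integral_mono_of_nonneg (ae_of_all _ fun x => abs_nonneg _)
          hGint.integral_norm_prod_left
        filter_upwards with x
        rw [hid x, ← Real.norm_eq_abs]
        exact norm_integral_le_integral_norm _
    _ = ∫ y in Set.Ioi (0:ℝ), ∫ x in Set.Ioi (0:ℝ), ‖Kf x y * v y‖ :=
        integral_integral_swap hGint.norm
    _ ≤ ∫ y in Set.Ioi (0:ℝ), 4 / t * (y ^ 2 * |v y|) := by
        apply integral_mono_of_nonneg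
          (ae_of_all _ fun y => integral_nonneg fun x => norm_nonneg _)
          (hv2.const_mul (4 / t))
        filter_upwards [ae_restrict_mem measurableSet_Ioi] with y hy
        exact hnormbd y hy
    _ = 4 * (∫ y in Set.Ioi (0:ℝ), y ^ 2 * |v y|) * t ^ (-(1:ℝ)) := by
        rw [integral_const_mul, Real.rpow_neg_one]
        field_simp

/-- Dipole asymptotics with rate for the half-line Dirichlet problem:
`∫₀^∞ |u(x,t) − 2𝒩₁·D(x,t)| dx ≤ C·𝒩₂·t^{-1}` with a universal constant `C`. -/
theorem halfline_dipole_rate :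
    ∃ C : ℝ, 0 < C ∧ ∀ u₀ : ℝ → ℝ,
      IntegrableOn u₀ (Set.Ioi (0 : ℝ)) →
      IntegrableOn (fun y => y * u₀ y) (Set.Ioi (0 : ℝ)) →
      IntegrableOn (fun y => y ^ 2 * |u₀ y|) (Set.Ioi (0 : ℝ)) →
      ∀ t : ℝ, 0 < t →
        (∫ x in Set.Ioi (0 : ℝ),
            |halfLineSol u₀ x t -
              2 * (∫ y in Set.Ioi (0 : ℝ), y * u₀ y) * dipole x t|) ≤
          C * (∫ y in Set.Ioi (0 : ℝ), y ^ 2 * |u₀ y|) * t ^ (-(1 : ℝ)) := by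
  refine ⟨4, by norm_num, ?_⟩
  intro u₀ hu₀ hu₁ hu₂ t ht
  set v : ℝ → ℝ := hu₀.1.mk u₀ with hvdef
  have hvm : StronglyMeasurable v := hu₀.1.stronglyMeasurable_mk
  have he : u₀ =ᵐ[volume.restrict (Set.Ioi (0:ℝ))] v := hu₀.1.ae_eq_mk
  have hv : IntegrableOn v (Set.Ioi (0:ℝ)) := hu₀.congr he
  have he1 : (fun y => y * u₀ y) =ᵐ[volume.restrict (Set.Ioi (0:ℝ))] (fun y => y * v y) :=
    he.mono fun y h => by dsimp only; rw [h]
  have hv1 : IntegrableOn (fun y => y * v y) (Set.Ioi (0:ℝ)) := hu₁.congr he1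
  have he2 : (fun y => y ^ 2 * |u₀ y|) =ᵐ[volume.restrict (Set.Ioi (0:ℝ))]
      (fun y => y ^ 2 * |v y|) := he.mono fun y h => by dsimp only; rw [h]
  have hv2 : IntegrableOn (fun y => y ^ 2 * |v y|) (Set.Ioi (0:ℝ)) := hu₂.congr he2
  have hN1 : (∫ y in Set.Ioi (0:ℝ), y * u₀ y) = ∫ y in Set.Ioi (0:ℝ), y * v y :=
    integral_congr_ae he1
  have hN2 : (∫ y in Set.Ioi (0:ℝ), y ^ 2 * |u₀ y|) = ∫ y in Set.Ioi (0:ℝ), y ^ 2 * |v y| :=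
    integral_congr_ae he2
  have hsol : ∀ x, halfLineSol u₀ x t = halfLineSol v x t := by
    intro x
    unfold halfLineSol
    exact integral_congr_ae (he.mono fun y h => by dsimp only; rw [h])
  have hgoal : (∫ x in Set.Ioi (0:ℝ),
        |halfLineSol u₀ x t - 2 * (∫ y in Set.Ioi (0:ℝ), y * u₀ y) * dipole x t|)
      = ∫ x in Set.Ioi (0:ℝ),
        |halfLineSol v x t - 2 * (∫ y in Set.Ioi (0:ℝ), y * v y) * dipole x t| := by
    apply integral_congr_ae
    apply ae_of_all
    intro x
    dsimp only
    rw [hsol x, hN1]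
  rw [hgoal, hN2]
  exact main_est ht v hvm hv hv1 hv2
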